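/- For the Schrödinger approximation ψ_app(x,y,z) = e^{i k_z z} w(εx, εy, ε²z) with w(·,Z) ∈ H^{s_A}(ℝ²) and s_A ≥ s, there is a constant C > 0, independent of ε ∈ (0,1), such that ‖(I - P_hyp)ψ_app(·,·,z)‖_{H^s(dx,dy)} ≤ C ε^{s_A - 1} ‖w(·,ε²z)‖_{H^{s_A}} for all z. -/

import Mathlib

open MeasureTheory Complex
open scoped FourierTransform ENNReal

noncomputable section

/-- The plane `ℝ²` as a Euclidean space. -/
abbrev E2 := EuclideanSpace ℝ (Fin 2)

/-- The `H^s` norm `‖(1+|k|²)^{s/2} û‖_{L²}`. -/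
def hsNorm (s : ℝ) (u : E2 → ℂ) : ℝ≥0∞ :=
  eLpNorm (fun k : E2 => ((1 + ‖k‖ ^ 2) ^ (s / 2) : ℝ) • 𝓕 u k) 2 volume

/-- Characteristic function of the ball `{|k|² ≤ ω²/2}`. -/
def chi (ω : ℝ) (k : E2) : ℝ := if ‖k‖ ^ 2 ≤ ω ^ 2 / 2 then 1 else 0

private lemma keyreal {b ε x y s sA : ℝ} (hb : 0 < b) (hε0 : 0 < ε) (hε1 : ε < 1)
    (hx : b < x) (hxy : x = ε ^ 2 * y) (hs : 0 ≤ s) (hssA : s ≤ sA) :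
    (1 + x) ^ (s / 2) ≤
      ((1 + 1 / b) ^ (s / 2) * b ^ ((s - sA) / 2)) * (ε ^ sA * (1 + y) ^ (sA / 2)) := by
  have hx0 : 0 < x := hb.trans hx
  have hε2 : (0:ℝ) < ε ^ 2 := by positivity
  have hy0 : 0 < y := by nlinarith
  have h1 : (1 + x) ≤ (1 + 1 / b) * x := by
    have h1b : (1:ℝ) ≤ x / b := (one_le_div hb).2 hx.le
    have : (1 + 1 / b) * x = x + x / b := by ring
    linarith
  have hA : (1 + x) ^ (s / 2) ≤ (1 + 1 / b) ^ (s / 2) * x ^ (s / 2) := by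
    calc (1 + x) ^ (s / 2) ≤ ((1 + 1 / b) * x) ^ (s / 2) :=
          Real.rpow_le_rpow (by positivity) h1 (by positivity)
      _ = (1 + 1 / b) ^ (s / 2) * x ^ (s / 2) := Real.mul_rpow (by positivity) hx0.le
  have hC : x ^ (s / 2) = x ^ ((s - sA) / 2) * x ^ (sA / 2) := by
    rw [← Real.rpow_add hx0]; ring_nf
  have hD : x ^ ((s - sA) / 2) ≤ b ^ ((s - sA) / 2) :=
    Real.rpow_le_rpow_of_nonpos hb hx.le (by linarith)
  have hF : (ε ^ 2 : ℝ) ^ (sA / 2) = ε ^ sA := by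
    rw [← Real.rpow_natCast ε 2, ← Real.rpow_mul hε0.le]
    congr 1
    push_cast
    ring
  have hE : x ^ (sA / 2) ≤ ε ^ sA * (1 + y) ^ (sA / 2) := by
    calc x ^ (sA / 2) = (ε ^ 2) ^ (sA / 2) * y ^ (sA / 2) := by
          rw [hxy, Real.mul_rpow hε2.le hy0.le]
      _ ≤ (ε ^ 2) ^ (sA / 2) * (1 + y) ^ (sA / 2) :=
          mul_le_mul_of_nonneg_left
            (Real.rpow_le_rpow hy0.le (by linarith) (by linarith)) (by positivity)
      _ = ε ^ sA * (1 + y) ^ (sA / 2) := by rw [hF]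
  calc (1 + x) ^ (s / 2) ≤ (1 + 1 / b) ^ (s / 2) * x ^ (s / 2) := hA
    _ = (1 + 1 / b) ^ (s / 2) * (x ^ ((s - sA) / 2) * x ^ (sA / 2)) := by rw [← hC]
    _ ≤ (1 + 1 / b) ^ (s / 2) * (b ^ ((s - sA) / 2) * (ε ^ sA * (1 + y) ^ (sA / 2))) :=
        mul_le_mul_of_nonneg_left
          (mul_le_mul hD hE (by positivity) (by positivity)) (by positivity)
    _ = ((1 + 1 / b) ^ (s / 2) * b ^ ((s - sA) / 2)) * (ε ^ sA * (1 + y) ^ (sA / 2)) := by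
        ring

/-- For the Schrödinger approximation `ψ_app(x,y,z) = e^{i k_z z} w(εx,εy,ε²z)`, whose
Fourier transform in `(x,y)` is `ε⁻² ŵ(k/ε, ε²z) e^{i k_z z}`, the elliptic part
satisfies `‖(I - P_hyp) ψ_app(·,·,z)‖_{H^s} ≤ C ε^{s_A-1} ‖w(·,ε²z)‖_{H^{s_A}}`, with
`C` independent of `ε ∈ (0,1)` and of `z`.  Here `W = w(·, ε²z)` denotes the relevant
slice of `w`, and the `H^s` norm of `(I - P_hyp) ψ_app` is computed on the Fourier
side via the multiplier `1 - χ`. -/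
theorem elliptic_part_small (ω kz : ℝ) (hω : 0 < ω) (hkz : kz ^ 2 = ω ^ 2)
    (s sA : ℕ) (hsA : s ≤ sA) :
    ∃ C : ℝ, 0 < C ∧ ∀ ε : ℝ, ε ∈ Set.Ioo (0 : ℝ) 1 → ∀ z : ℝ, ∀ W : E2 → ℂ,
      eLpNorm (fun k : E2 =>
          ((1 + ‖k‖ ^ 2) ^ ((s : ℝ) / 2) : ℝ) •
            (((1 - chi ω k : ℝ)) •
              ((ε ^ 2)⁻¹ • 𝓕 W (ε⁻¹ • k) * Complex.exp (I * kz * z)))) 2 volume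
        ≤ ENNReal.ofReal (C * ε ^ ((sA : ℝ) - 1)) * hsNorm sA W := by
  have hs0 : (0:ℝ) ≤ (s:ℝ) := Nat.cast_nonneg s
  have hssA : (s:ℝ) ≤ (sA:ℝ) := Nat.cast_le.2 hsA
  set b : ℝ := ω ^ 2 / 2 with hbdef
  have hb : 0 < b := by positivity
  set A : ℝ := (1 + 1 / b) ^ ((s:ℝ) / 2) * b ^ (((s:ℝ) - (sA:ℝ)) / 2) with hA
  have hApos : 0 < A := by positivity
  refine ⟨A, hApos, ?_⟩
  rintro ε ⟨hε0, hε1⟩ z W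
  -- continuity / measurability of the Fourier transform
  have hL : Continuous fun p : E2 × E2 => innerₗ E2 p.1 p.2 := by
    simpa using (continuous_inner (𝕜 := ℝ) (E := E2))
  have hFWc : Continuous (𝓕 W) := by
    by_cases hW : Integrable W volume
    · exact VectorFourier.fourierIntegral_continuous Real.continuous_fourierChar hL hW
    · have : 𝓕 W = fun _ => 0 := funext fun w =>
        integral_undef fun h => hW
          ((VectorFourier.fourierIntegral_convergent_iff Real.continuous_fourierChar hL w).1 h)
      rw [this]; exact continuous_const
  set g : E2 → ℂ := fun κ => ((1 + ‖κ‖ ^ 2) ^ ((sA:ℝ) / 2) : ℝ) • 𝓕 W κ with hg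
  have hgc : Continuous g := by
    refine Continuous.smul (f := fun κ : E2 => ((1 + ‖κ‖ ^ 2) ^ ((sA:ℝ) / 2) : ℝ)) ?_ hFWc
    exact ((continuous_const.add ((continuous_norm).pow 2)).rpow_const
      (fun κ => Or.inl (by positivity : (1:ℝ) + ‖κ‖ ^ 2 ≠ 0)))
  set T : E2 → E2 := fun k => ε⁻¹ • k with hT
  have hTm : Measurable T := measurable_const_smul ε⁻¹
  -- scaling of the measure
  have hmap : Measure.map T volume = ENNReal.ofReal (ε ^ 2) • volume := by
    rw [hT]
    rw [show (fun k : E2 => ε⁻¹ • k) = (ε⁻¹ • ·) from rfl,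
      Measure.map_addHaar_smul (μ := (volume : Measure E2)) (by positivity : ε⁻¹ ≠ 0)]
    congr 1
    rw [finrank_euclideanSpace_fin]
    rw [_root_.abs_of_nonneg (by positivity)]
    field_simp
  have hcomp : eLpNorm (g ∘ T) 2 volume = ENNReal.ofReal ε * eLpNorm g 2 volume := by
    rw [← eLpNorm_map_measure (by rw [hmap]; exact hgc.aestronglyMeasurable) hTm.aemeasurable,
      hmap, eLpNorm_smul_measure_of_ne_top (by norm_num)]
    have h1 : ((1 : ℝ≥0∞) / 2).toReal = (1:ℝ)/2 := by norm_num
    rw [h1, smul_eq_mul, ENNReal.ofReal_rpow_of_pos (by positivity)]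
    congr 2
    rw [← Real.rpow_natCast ε 2, ← Real.rpow_mul hε0.le]
    norm_num
  -- pointwise bound
  set c : ℝ := A * ε ^ ((sA:ℝ) - 2) with hc
  have hcpos : 0 < c := by positivity
  have hexp : ‖Complex.exp (I * kz * z)‖ = 1 := by
    rw [Complex.norm_exp]
    simp
  have hpt : ∀ k : E2, ‖((1 + ‖k‖ ^ 2) ^ ((s : ℝ) / 2) : ℝ) •
            (((1 - chi ω k : ℝ)) •
              ((ε ^ 2)⁻¹ • 𝓕 W (ε⁻¹ • k) * Complex.exp (I * kz * z)))‖
      ≤ ‖(c • (g ∘ T)) k‖ := by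
    intro k
    have hRHS : ‖(c • (g ∘ T)) k‖
        = c * ((1 + ‖T k‖ ^ 2) ^ ((sA:ℝ) / 2) * ‖𝓕 W (T k)‖) := by
      simp only [Pi.smul_apply, Function.comp_apply, hg, norm_smul, Real.norm_eq_abs]
      rw [_root_.abs_of_nonneg hcpos.le, _root_.abs_of_nonneg (by positivity)]
    by_cases hk : ‖k‖ ^ 2 ≤ ω ^ 2 / 2
    · have : chi ω k = 1 := by simp [chi, hk]
      rw [this]
      simp only [sub_self, zero_smul, smul_zero, norm_zero]
      exact norm_nonneg _
    · have hchi : chi ω k = 0 := by simp [chi, hk]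
      rw [hchi, hRHS]
      have hLHS : ‖((1 + ‖k‖ ^ 2) ^ ((s : ℝ) / 2) : ℝ) •
            (((1 - 0 : ℝ)) •
              ((ε ^ 2)⁻¹ • 𝓕 W (ε⁻¹ • k) * Complex.exp (I * kz * z)))‖
          = (1 + ‖k‖ ^ 2) ^ ((s:ℝ) / 2) * ((ε ^ 2)⁻¹ * ‖𝓕 W (ε⁻¹ • k)‖) := by
        rw [sub_zero, one_smul, norm_smul, norm_mul, norm_smul, hexp, Real.norm_eq_abs,
          Real.norm_eq_abs, _root_.abs_of_nonneg (by positivity : (0:ℝ) ≤ (1 + ‖k‖ ^ 2) ^ ((s:ℝ)/2)),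
          _root_.abs_of_nonneg (by positivity : (0:ℝ) ≤ (ε ^ 2)⁻¹)]
        ring
      rw [hLHS]
      have hxy : ‖k‖ ^ 2 = ε ^ 2 * ‖ε⁻¹ • k‖ ^ 2 := by
        rw [norm_smul, Real.norm_eq_abs, _root_.abs_of_pos (inv_pos.2 hε0)]
        field_simp
      have hkey := keyreal hb hε0 hε1 (lt_of_not_ge hk) hxy hs0 hssA
      have hTk : T k = ε⁻¹ • k := rfl
      have hpow : ε ^ ((sA:ℝ)) * (ε ^ 2)⁻¹ = ε ^ ((sA:ℝ) - 2) := by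
        rw [← Real.rpow_natCast ε 2, ← Real.rpow_neg hε0.le, ← Real.rpow_add hε0]
        congr 1 <;> push_cast <;> ring
      rw [hTk]
      calc (1 + ‖k‖ ^ 2) ^ ((s:ℝ) / 2) * ((ε ^ 2)⁻¹ * ‖𝓕 W (ε⁻¹ • k)‖)
          = ((1 + ‖k‖ ^ 2) ^ ((s:ℝ) / 2) * (ε ^ 2)⁻¹) * ‖𝓕 W (ε⁻¹ • k)‖ := by ring
        _ ≤ ((A * (ε ^ ((sA:ℝ)) * (1 + ‖ε⁻¹ • k‖ ^ 2) ^ ((sA:ℝ) / 2))) * (ε ^ 2)⁻¹)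
              * ‖𝓕 W (ε⁻¹ • k)‖ := by
            refine mul_le_mul_of_nonneg_right (mul_le_mul_of_nonneg_right ?_ (by positivity))
              (norm_nonneg _)
            exact hkey
        _ = c * ((1 + ‖ε⁻¹ • k‖ ^ 2) ^ ((sA:ℝ) / 2) * ‖𝓕 W (ε⁻¹ • k)‖) := by
            rw [hc, ← hpow]; ring
  -- assemble
  have hfinal : A * ε ^ ((sA:ℝ) - 2) * ε = A * ε ^ ((sA:ℝ) - 1) := by
    rw [mul_assoc]
    congr 1
    have h1 : ε ^ ((sA:ℝ) - 2) * ε = ε ^ ((sA:ℝ) - 2) * ε ^ (1:ℝ) := by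
      rw [Real.rpow_one]
    rw [h1, ← Real.rpow_add hε0]
    congr 1 <;> push_cast <;> ring
  calc eLpNorm (fun k : E2 =>
          ((1 + ‖k‖ ^ 2) ^ ((s : ℝ) / 2) : ℝ) •
            (((1 - chi ω k : ℝ)) •
              ((ε ^ 2)⁻¹ • 𝓕 W (ε⁻¹ • k) * Complex.exp (I * kz * z)))) 2 volume
      ≤ eLpNorm (c • (g ∘ T)) 2 volume := eLpNorm_mono hpt
    _ = (‖c‖₊ : ℝ≥0∞) * eLpNorm (g ∘ T) 2 volume := eLpNorm_const_smul c (g ∘ T) 2 volume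
    _ = ENNReal.ofReal c * (ENNReal.ofReal ε * eLpNorm g 2 volume) := by
        rw [hcomp]; exact congrArg (· * _) (Real.enorm_eq_ofReal hcpos.le)
    _ = ENNReal.ofReal (A * ε ^ ((sA:ℝ) - 1)) * hsNorm sA W := by
        rw [← mul_assoc, ← ENNReal.ofReal_mul hcpos.le, hc, hfinal]
        rfl
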